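/- Let b_1,...,b_s ≥ 2 be pairwise coprime integers. For i = 1,...,s let x_i = Σ_{j≥1} x_{i,j} b_i^{−j} with digits x_{i,j} ∈ {0,...,b_i−1} and truncations [x_i]_r = Σ_{j=1}^r x_{i,j} b_i^{−j}. For a vector r = (r_1,...,r_s) of positive integers let B_r = ∏_{i=1}^s b_i^{r_i} and let M_{i,r} be an integer with M_{i,r}(B_r b_i^{−r_i}) ≡ 1 (mod b_i^{r_i}). Then for n ∈ ℕ₀: φ_{b_i}(n) ∈ [[x_i]_{r_i}, [x_i]_{r_i} + b_i^{−r_i}) for all i = 1,...,s if and only if n ≡ ẍ_r (mod B_r), where ẍ_r = Σ_{i=1}^s M_{i,r} B_r b_i^{−r_i} ẋ_{i,r_i} and ẋ_{i,r_i} = Σ_{j=1}^{r_i} x_{i,j} b_i^{j−1}. -/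

import Mathlib

open Finset

open scoped Classical

/-- The radical inverse function in base `b`: `φ_b(n) = Σ_j n_j b^{-j-1}`. -/
noncomputable def radInv (b n : ℕ) : ℝ :=
  ∑' j : ℕ, ((n / b ^ j % b : ℕ) : ℝ) / (b : ℝ) ^ (j + 1)

/-- The axis-parallel box `[0, y) = ∏_i [0, y_i)`. -/
def box {s : ℕ} (y : Fin s → ℝ) : Set (Fin s → ℝ) :=
  Set.univ.pi fun i => Set.Ico 0 (y i)

/-- The discrepancy function `Δ(y, (x_n)_{n=a}^{a+N-1})`. -/
noncomputable def disc {s : ℕ} (x : ℕ → Fin s → ℝ) (a N : ℕ) (y : Fin s → ℝ) : ℝ :=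
  ∑ n ∈ Finset.Ico a (a + N),
    ((box y).indicator (fun _ => (1 : ℝ)) (x n) - ∏ i, y i)

/-- The star discrepancy of `(x_n)_{n=a}^{a+N-1}`. -/
noncomputable def Dstar {s : ℕ} (x : ℕ → Fin s → ℝ) (a N : ℕ) : ℝ :=
  sSup {v : ℝ | ∃ y : Fin s → ℝ, (∀ i, y i ∈ Set.Ico (0 : ℝ) 1) ∧
    v = |disc x a N y| / (N : ℝ)}

/-- `(x_n)_{0 ≤ n < b^m}` is a `(t,m,s)`-net in base `b`. -/
def IsNet {s : ℕ} (b t m : ℕ) (x : ℕ → Fin s → ℝ) : Prop :=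
  (∀ n < b ^ m, ∀ i, x n i ∈ Set.Ico (0 : ℝ) 1) ∧
  ∀ d a : Fin s → ℕ, (∀ i, a i < b ^ d i) → (∑ i, d i) + t = m →
    ((Finset.range (b ^ m)).filter
      (fun n => ∀ i, x n i ∈ Set.Ico ((a i : ℝ) / b ^ d i) ((a i + 1 : ℝ) / b ^ d i))).card
      = b ^ t

/-- The `j`-th `b`-adic digit (`j ≥ 1`) of a real number `x ∈ [0,1)`. -/
noncomputable def bdigit (b : ℕ) (x : ℝ) (j : ℕ) : ℕ := (⌊x * (b : ℝ) ^ j⌋ % (b : ℤ)).toNat % b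

/-- The `b`-adic absolute valuation `‖x‖_b = b^{-(k+1)}` where the digits
`x_1, …, x_k` vanish and `x_{k+1} ≠ 0`; it is `0` when all digits vanish. -/
noncomputable def bval (b : ℕ) (x : ℝ) : ℝ :=
  if h : ∃ j, 1 ≤ j ∧ bdigit b x j ≠ 0 then
    (1 : ℝ) / (b : ℝ) ^ sInf {j | 1 ≤ j ∧ bdigit b x j ≠ 0}
  else 0

/-- The `b`-adic absolute valuation of a vector, `‖x‖_b = ∏_j ‖x^{(j)}‖_b`. -/
noncomputable def bvalVec {s : ℕ} (b : ℕ) (x : Fin s → ℝ) : ℝ := ∏ i, bval b (x i)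

/-- Digitwise subtraction modulo `b`: `x ⊖ σ`. -/
noncomputable def bsub (b : ℕ) (x σ : ℝ) : ℝ :=
  ∑' j : ℕ, (((bdigit b x (j + 1) + b - bdigit b σ (j + 1)) % b : ℕ) : ℝ) / (b : ℝ) ^ (j + 1)

/-- Digitwise addition modulo `b`: `x ⊕ σ`. -/
noncomputable def badd (b : ℕ) (x σ : ℝ) : ℝ :=
  ∑' j : ℕ, (((bdigit b x (j + 1) + bdigit b σ (j + 1)) % b : ℕ) : ℝ) / (b : ℝ) ^ (j + 1)

/-- A `b^m`-point set in `[0,1)^s` is `d`-admissible in base `b`. -/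
def IsAdmissible {s : ℕ} (b m : ℕ) (d : ℤ) (x : ℕ → Fin s → ℝ) : Prop :=
  ∀ k n : ℕ, k < n → n < b ^ m →
    bvalVec b (fun i => bsub b (x n i) (x k i)) > (b : ℝ) ^ (-((m : ℤ) + d))

/-- The two-dimensional Halton sequence in bases `2` and `3`. -/
noncomputable def H23 : ℕ → Fin 2 → ℝ := fun n => ![radInv 2 n, radInv 3 n]

/-- `ytil` is the quantity `ỹ_m` for the Halton sequence in bases `2` and `3`
(so that `τ₁ = 2`, `τ₂ = 1`). -/
def IsYtilde (m ytil : ℕ) : Prop :=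
  ytil < 2 ^ (2 * (m + 1)) * 3 ^ (m + 1) ∧
  ∃ M₁ M₂ : ℤ,
    M₁ * 3 ^ (m + 1) ≡ 1 [ZMOD (2 : ℤ) ^ (2 * (m + 1))] ∧
    M₂ * 2 ^ (2 * (m + 1)) ≡ 1 [ZMOD (3 : ℤ) ^ (m + 1)] ∧
    (ytil : ℤ) ≡ M₁ * 3 ^ (m + 1) * (∑ j ∈ Finset.Icc 1 (m + 1), (2 : ℤ) ^ (2 * j - 1))
        + M₂ * 2 ^ (2 * (m + 1)) * (∑ j ∈ Finset.Icc 1 (m + 1), (3 : ℤ) ^ (j - 1))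
      [ZMOD (2 : ℤ) ^ (2 * (m + 1)) * 3 ^ (m + 1)]


section nataux

lemma sum_digits_lt (b r : ℕ) (hb : 1 ≤ b) (c : ℕ → ℕ) (h : ∀ j < r, c j < b) :
    ∑ j ∈ Finset.range r, c j * b ^ j < b ^ r := by
  induction r with
  | zero => simp
  | succ r ih =>
    rw [Finset.sum_range_succ, pow_succ']
    have h1 : ∑ j ∈ Finset.range r, c j * b ^ j < b ^ r := ih (fun j hj => h j (by omega))
    have h2 : c r * b ^ r ≤ b * b ^ r - b ^ r := by
      rw [← Nat.sub_one_mul]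
      exact Nat.mul_le_mul_right _ (by have := h r (by omega); omega)
    have h3 : b ^ r ≤ b * b ^ r := Nat.le_mul_of_pos_left _ (by omega)
    omega

lemma digit_of_sum (b : ℕ) (hb : 1 ≤ b) (r k : ℕ) (c : ℕ → ℕ) (h : ∀ j < r, c j < b)
    (hk : k < r) :
    (∑ j ∈ Finset.range r, c j * b ^ j) / b ^ k % b = c k := by
  have hsplit : ∑ j ∈ Finset.Ico 0 k, c j * b ^ j + ∑ j ∈ Finset.Ico k r, c j * b ^ j
      = ∑ j ∈ Finset.Ico 0 r, c j * b ^ j :=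
    Finset.sum_Ico_consecutive _ (Nat.zero_le _) hk.le
  rw [Finset.range_eq_Ico, ← hsplit]
  have hlow : ∑ j ∈ Finset.Ico 0 k, c j * b ^ j < b ^ k := by
    rw [← Finset.range_eq_Ico]
    exact sum_digits_lt b k hb c (fun j hj => h j (by omega))
  have hT : ∑ j ∈ Finset.Ico k r, c j * b ^ j
      = b ^ k * ∑ j ∈ Finset.range (r - k), c (k + j) * b ^ j := by
    rw [Finset.sum_Ico_eq_sum_range, Finset.mul_sum]
    refine Finset.sum_congr rfl fun j _ => ?_
    rw [pow_add]; ring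
  rw [hT, Nat.add_mul_div_left _ _ (Nat.pow_pos hb),
    Nat.div_eq_of_lt hlow, Nat.zero_add]
  obtain ⟨m, hm⟩ : ∃ m, r - k = m + 1 := ⟨r - k - 1, by omega⟩
  rw [hm, Finset.sum_range_succ']
  have : ∑ j ∈ Finset.range m, c (k + (j + 1)) * b ^ (j + 1)
      = b * ∑ j ∈ Finset.range m, c (k + (j + 1)) * b ^ j := by
    rw [Finset.mul_sum]; refine Finset.sum_congr rfl fun j _ => ?_; ring
  rw [this, Nat.add_comm, Nat.add_mul_mod_self_left]
  simpa using Nat.mod_eq_of_lt (h k hk)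

lemma mod_pow_eq_sum_digits (b : ℕ) (r m : ℕ) :
    m % b ^ r = ∑ i ∈ Finset.range r, (m / b ^ i % b) * b ^ i := by
  induction r with
  | zero => simp [Nat.mod_one]
  | succ r ih =>
    rw [Finset.sum_range_succ, ← ih, pow_succ, Nat.mod_mul]
    ring

def revd (b r m : ℕ) : ℕ := ∑ i ∈ Finset.range r, (m / b ^ (r - 1 - i) % b) * b ^ i

lemma revd_lt (b r m : ℕ) (hb : 1 ≤ b) : revd b r m < b ^ r :=
  sum_digits_lt b r hb _ (fun j _ => Nat.mod_lt _ (by omega))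

lemma digit_revd (b : ℕ) (hb : 1 ≤ b) (r k m : ℕ) (hk : k < r) :
    revd b r m / b ^ k % b = m / b ^ (r - 1 - k) % b :=
  digit_of_sum b hb r k _ (fun j _ => Nat.mod_lt _ (by omega)) hk

lemma revd_revd (b : ℕ) (hb : 1 ≤ b) (r m : ℕ) (hm : m < b ^ r) :
    revd b r (revd b r m) = m := by
  have key : revd b r (revd b r m)
      = ∑ i ∈ Finset.range r, (revd b r m / b ^ (r - 1 - i) % b) * b ^ i := rfl
  rw [key]
  have : ∀ i ∈ Finset.range r,
      (revd b r m / b ^ (r - 1 - i) % b) * b ^ i = (m / b ^ i % b) * b ^ i := by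
    intro i hi
    rw [Finset.mem_range] at hi
    rw [digit_revd b hb r _ m (by omega)]
    have : r - 1 - (r - 1 - i) = i := by omega
    rw [this]
  rw [Finset.sum_congr rfl this, ← mod_pow_eq_sum_digits b, Nat.mod_eq_of_lt hm]

lemma digit_mod_pow (b : ℕ) (hb : 1 ≤ b) (r j m : ℕ) (hj : j < r) :
    (m % b ^ r) / b ^ j % b = m / b ^ j % b := by
  conv_rhs => rw [← Nat.div_add_mod m (b ^ r)]
  have h1 : b ^ r = b ^ j * b ^ (r - j) := by rw [← pow_add]; congr 1; omega
  rw [h1, mul_assoc, Nat.mul_add_div (Nat.pow_pos hb), Nat.add_comm]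
  have h2 : b ^ (r - j) * (m / (b ^ j * b ^ (r - j))) % b = 0 := by
    obtain ⟨u, hu⟩ : ∃ u, r - j = u + 1 := ⟨r - j - 1, by omega⟩
    rw [hu, pow_succ']
    simp [Nat.mul_mod, Nat.mul_mod_left]
  rw [Nat.add_mod, h2, Nat.add_zero, Nat.mod_mod_of_dvd _ dvd_rfl]

/-- The reflected digit sum equals `revd`. -/
lemma sum_reflect_eq_revd (b r n : ℕ) :
    ∑ j ∈ Finset.range r, (n / b ^ j % b) * b ^ (r - 1 - j) = revd b r n := by
  rw [revd, ← Finset.sum_range_reflect (fun i => (n / b ^ (r - 1 - i) % b) * b ^ i) r]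
  refine Finset.sum_congr rfl fun j hj => ?_
  rw [Finset.mem_range] at hj
  have : r - 1 - (r - 1 - j) = j := by omega
  rw [this]

lemma revd_mod_pow (b : ℕ) (hb : 1 ≤ b) (r n : ℕ) :
    revd b r (n % b ^ r) = revd b r n := by
  unfold revd
  refine Finset.sum_congr rfl fun i hi => ?_
  rw [Finset.mem_range] at hi
  rw [digit_mod_pow b hb r _ n (by omega)]

end nataux

section realaux

lemma radInv_eq_sum {b : ℕ} (hb : 2 ≤ b) {n K : ℕ} (h : n < b ^ K) :
    radInv b n = ∑ j ∈ Finset.range K, ((n / b ^ j % b : ℕ) : ℝ) / (b : ℝ) ^ (j + 1) := by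
  refine tsum_eq_sum fun j hj => ?_
  rw [Finset.mem_range, not_lt] at hj
  have : n < b ^ j := lt_of_lt_of_le h (Nat.pow_le_pow_right (by omega) hj)
  rw [Nat.div_eq_of_lt this]
  simp

lemma radInv_zero (b : ℕ) : radInv b 0 = 0 := by
  unfold radInv
  simp

lemma radInv_nonneg (b n : ℕ) : 0 ≤ radInv b n :=
  tsum_nonneg fun j => by positivity

lemma radInv_mul_pow {b : ℕ} (hb : 2 ≤ b) (n r : ℕ) :
    radInv b n * (b : ℝ) ^ r
      = ((revd b r n : ℕ) : ℝ) + radInv b (n / b ^ r) := by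
  have hb0 : (0 : ℝ) < (b : ℝ) := by positivity
  have hbne : (b : ℝ) ≠ 0 := ne_of_gt hb0
  have hn : n < b ^ n := Nat.lt_pow_self (by omega)
  have hn2 : n < b ^ (r + n) :=
    lt_of_lt_of_le hn (Nat.pow_le_pow_right (by omega) (by omega))
  rw [radInv_eq_sum hb hn2, Finset.sum_mul]
  have hsplit : ∑ j ∈ Finset.Ico 0 r, ((n / b ^ j % b : ℕ) : ℝ) / (b : ℝ) ^ (j + 1) * (b:ℝ) ^ r
      + ∑ j ∈ Finset.Ico r (r + n), ((n / b ^ j % b : ℕ) : ℝ) / (b : ℝ) ^ (j + 1) * (b:ℝ) ^ r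
      = ∑ j ∈ Finset.Ico 0 (r + n), ((n / b ^ j % b : ℕ) : ℝ) / (b : ℝ) ^ (j + 1) * (b:ℝ) ^ r :=
    Finset.sum_Ico_consecutive _ (Nat.zero_le _) (by omega)
  rw [Finset.range_eq_Ico, ← hsplit]
  congr 1
  · -- head part
    rw [← sum_reflect_eq_revd, ← Finset.range_eq_Ico]
    push_cast
    refine Finset.sum_congr rfl fun j hj => ?_
    rw [Finset.mem_range] at hj
    have hpow : (b : ℝ) ^ r = (b : ℝ) ^ (j + 1) * (b : ℝ) ^ (r - 1 - j) := by
      rw [← pow_add]; congr 1; omega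
    rw [hpow]
    field_simp
  · -- tail part
    have hq : n / b ^ r < b ^ n := lt_of_le_of_lt (Nat.div_le_self _ _) hn
    rw [radInv_eq_sum hb hq, Finset.sum_Ico_eq_sum_range]
    have hrn : r + n - r = n := by omega
    rw [hrn]
    refine Finset.sum_congr rfl fun i hi => ?_
    have hd : n / b ^ (r + i) = n / b ^ r / b ^ i := by
      rw [Nat.div_div_eq_div_mul, ← pow_add]
    rw [hd]
    have hpow : (b : ℝ) ^ (r + i + 1) = (b : ℝ) ^ (i + 1) * (b : ℝ) ^ r := by
      rw [← pow_add]; congr 1; omega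
    rw [hpow]
    field_simp

lemma radInv_lt_one {b : ℕ} (hb : 2 ≤ b) (n : ℕ) : radInv b n < 1 := by
  have hb0 : (0 : ℝ) < (b : ℝ) ^ n := by positivity
  have hn : n < b ^ n := Nat.lt_pow_self (by omega)
  have h := radInv_mul_pow hb n n
  rw [Nat.div_eq_of_lt hn, radInv_zero, add_zero] at h
  have hA : (revd b n n : ℝ) < (b : ℝ) ^ n := by
    exact_mod_cast revd_lt b n n (by omega)
  rw [← h] at hA
  exact (mul_lt_iff_lt_one_left hb0).mp hA

end realaux
lemma icc_reindex (r : ℕ) (f : ℕ → ℝ) :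
    ∑ j ∈ Finset.Icc 1 r, f j = ∑ i ∈ Finset.range r, f (1 + i) := by
  rw [← Finset.Ico_add_one_right_eq_Icc, Finset.sum_Ico_eq_sum_range, Nat.add_sub_cancel]

lemma icc_reindex_nat (r : ℕ) (f : ℕ → ℕ) :
    ∑ j ∈ Finset.Icc 1 r, f j = ∑ i ∈ Finset.range r, f (1 + i) := by
  rw [← Finset.Ico_add_one_right_eq_Icc, Finset.sum_Ico_eq_sum_range, Nat.add_sub_cancel]

lemma key_coord {b : ℕ} (hb : 2 ≤ b) (x : ℕ → ℕ) (hx : ∀ j, x j < b) (r : ℕ)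
    (hr : 1 ≤ r) (n : ℕ) :
    radInv b n ∈ Set.Ico (∑ j ∈ Finset.Icc 1 r, (x j : ℝ) / (b : ℝ) ^ j)
      ((∑ j ∈ Finset.Icc 1 r, (x j : ℝ) / (b : ℝ) ^ j) + ((b : ℝ) ^ r)⁻¹) ↔
    n % b ^ r = ∑ j ∈ Finset.Icc 1 r, x j * b ^ (j - 1) := by
  have hb1 : 1 ≤ b := by omega
  have hbpos : (0 : ℝ) < (b : ℝ) ^ r := by positivity
  set c : ℕ := ∑ j ∈ Finset.Icc 1 r, x j * b ^ (j - 1) with hcdef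
  have hc_sum : c = ∑ i ∈ Finset.range r, x (1 + i) * b ^ i := by
    rw [hcdef, icc_reindex_nat]
    refine Finset.sum_congr rfl fun i _ => ?_
    rw [show 1 + i - 1 = i from by omega]
  have hclt : c < b ^ r := by
    rw [hc_sum]; exact sum_digits_lt b r hb1 _ (fun j _ => hx _)
  have hdigc : ∀ i < r, c / b ^ i % b = x (1 + i) := by
    intro i hi
    rw [hc_sum]
    exact digit_of_sum b hb1 r i _ (fun j _ => hx _) hi
  set a : ℕ := revd b r c with hadef
  have ha_sum : a = ∑ i ∈ Finset.range r, x (1 + (r - 1 - i)) * b ^ i := by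
    rw [hadef, revd]
    refine Finset.sum_congr rfl fun i hi => ?_
    rw [Finset.mem_range] at hi
    rw [hdigc _ (by omega)]
  -- endpoint identity
  have hy : (a : ℝ) / (b : ℝ) ^ r = ∑ j ∈ Finset.Icc 1 r, (x j : ℝ) / (b : ℝ) ^ j := by
    rw [icc_reindex r (fun j => (x j : ℝ) / (b : ℝ) ^ j),
      ← Finset.sum_range_reflect (fun i => (x (1 + i) : ℝ) / (b : ℝ) ^ (1 + i)) r,
      ha_sum]
    push_cast
    rw [Finset.sum_div]
    refine Finset.sum_congr rfl fun i hi => ?_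
    rw [Finset.mem_range] at hi
    have hpow : (b : ℝ) ^ r = (b : ℝ) ^ i * (b : ℝ) ^ (1 + (r - 1 - i)) := by
      rw [← pow_add]; congr 1; omega
    rw [hpow]
    have h1 : ((b : ℝ)) ≠ 0 := by positivity
    field_simp
  have hmp := radInv_mul_pow hb n r
  set A : ℕ := revd b r n with hAdef
  set f : ℝ := radInv b (n / b ^ r) with hfdef
  have hf0 : 0 ≤ f := radInv_nonneg _ _
  have hf1 : f < 1 := radInv_lt_one hb _
  have hval : radInv b n = ((A : ℝ) + f) / (b : ℝ) ^ r := by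
    rw [eq_div_iff (ne_of_gt hbpos)]
    exact hmp
  have hAa : A = a ↔ n % b ^ r = c := by
    constructor
    · intro h
      have h1 : revd b r (n % b ^ r) = revd b r c := by
        rw [revd_mod_pow b hb1, ← hAdef, h, hadef]
      have := congrArg (revd b r) h1
      rwa [revd_revd b hb1 r _ (Nat.mod_lt _ (by positivity)),
        revd_revd b hb1 r _ hclt] at this
    · intro h
      rw [hAdef, ← revd_mod_pow b hb1, h, hadef]
  have hup : (a : ℝ) / (b : ℝ) ^ r + ((b : ℝ) ^ r)⁻¹ = ((a : ℝ) + 1) / (b : ℝ) ^ r := by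
    field_simp
  rw [Set.mem_Ico, ← hy, ← hAa, hval, hup, div_le_div_iff_of_pos_right hbpos,
    div_lt_div_iff_of_pos_right hbpos]
  constructor
  · rintro ⟨h1, h2⟩
    have hA_lt : (A : ℝ) < (a : ℝ) + 1 := by linarith
    have ha_lt : (a : ℝ) < (A : ℝ) + 1 := by linarith
    have h3 : A < a + 1 := by exact_mod_cast hA_lt
    have h4 : a < A + 1 := by exact_mod_cast ha_lt
    omega
  · intro h
    rw [h]
    constructor
    · linarith
    · linarith
lemma c_lt_pow {b : ℕ} (hb : 1 ≤ b) (x : ℕ → ℕ) (hx : ∀ j, x j < b) (r : ℕ) :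
    (∑ j ∈ Finset.Icc 1 r, x j * b ^ (j - 1)) < b ^ r := by
  rw [icc_reindex_nat]
  have h1 : ∑ k ∈ Finset.range r, x (1 + k) * b ^ (1 + k - 1)
      = ∑ k ∈ Finset.range r, x (1 + k) * b ^ k :=
    Finset.sum_congr rfl fun k _ => by rw [show 1 + k - 1 = k from by omega]
  rw [h1]
  exact sum_digits_lt b r hb _ fun j _ => hx _

theorem radInv_mem_iff_mod_crt' (s : ℕ) (hs : 1 ≤ s) (b : Fin s → ℕ) (hb : ∀ i, 2 ≤ b i)
    (hcop : ∀ i j, i ≠ j → Nat.Coprime (b i) (b j))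
    (x : Fin s → ℕ → ℕ) (hx : ∀ i j, x i j < b i)
    (r : Fin s → ℕ) (hr : ∀ i, 1 ≤ r i)
    (M : Fin s → ℤ)
    (hM : ∀ i, M i * ∏ j ∈ Finset.univ.erase i, (b j : ℤ) ^ r j ≡ 1
      [ZMOD ((b i : ℤ) ^ r i)])
    (n : ℕ) :
    (∀ i, radInv (b i) n ∈
        Set.Ico (∑ j ∈ Finset.Icc 1 (r i), (x i j : ℝ) / (b i : ℝ) ^ j)
          ((∑ j ∈ Finset.Icc 1 (r i), (x i j : ℝ) / (b i : ℝ) ^ j) + ((b i : ℝ) ^ r i)⁻¹)) ↔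
      (n : ℤ) ≡ ∑ i, M i * (∏ j ∈ Finset.univ.erase i, (b j : ℤ) ^ r j) *
          (∑ j ∈ Finset.Icc 1 (r i), (x i j : ℤ) * (b i : ℤ) ^ (j - 1))
        [ZMOD (∏ i, (b i : ℤ) ^ r i)] := by
  classical
  set P : Fin s → ℤ := fun i => ∏ j ∈ Finset.univ.erase i, (b j : ℤ) ^ r j with hP
  set c : Fin s → ℕ := fun i => ∑ j ∈ Finset.Icc 1 (r i), x i j * b i ^ (j - 1) with hc
  set X : ℤ := ∑ i, M i * P i * (c i : ℤ) with hX
  have hXeq : ∑ i, M i * P i *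
      (∑ j ∈ Finset.Icc 1 (r i), (x i j : ℤ) * (b i : ℤ) ^ (j - 1)) = X := by
    rw [hX]
    refine Finset.sum_congr rfl fun i _ => ?_
    congr 1
    rw [hc]
    push_cast
    rfl
  have hXc : ∀ i, X ≡ (c i : ℤ) [ZMOD (b i : ℤ) ^ r i] := by
    intro i
    have hterm : X ≡ M i * P i * (c i : ℤ) [ZMOD (b i : ℤ) ^ r i] := by
      rw [Int.modEq_iff_dvd]
      have hdecomp : M i * P i * (c i : ℤ) - X
          = -(∑ k ∈ Finset.univ.erase i, M k * P k * (c k : ℤ)) := by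
        rw [hX, ← Finset.add_sum_erase _ _ (Finset.mem_univ i)]
        ring
      rw [hdecomp, dvd_neg]
      refine Finset.dvd_sum fun k hk => ?_
      have hik : i ∈ Finset.univ.erase k :=
        Finset.mem_erase.mpr ⟨fun h => (Finset.mem_erase.mp hk).1 h.symm, Finset.mem_univ _⟩
      have hdvd : (b i : ℤ) ^ r i ∣ P k := Finset.dvd_prod_of_mem _ hik
      exact dvd_mul_of_dvd_left (dvd_mul_of_dvd_right hdvd _) _
    exact hterm.trans (by simpa using (hM i).mul_right (c i : ℤ))
  have hmod : ∀ i, n % (b i) ^ (r i) = c i ↔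
      (n : ℤ) ≡ (c i : ℤ) [ZMOD (b i : ℤ) ^ r i] := by
    intro i
    have hclt : c i < (b i) ^ (r i) := c_lt_pow (by have := hb i; omega) _ (hx i) _
    have h1 : ((b i : ℤ)) ^ (r i) = ((b i ^ r i : ℕ) : ℤ) := by push_cast; rfl
    rw [h1, Int.ModEq, ← Int.natCast_mod, ← Int.natCast_mod, Nat.cast_inj,
      Nat.mod_eq_of_lt hclt]
  have hkey : ∀ i, (radInv (b i) n ∈
      Set.Ico (∑ j ∈ Finset.Icc 1 (r i), (x i j : ℝ) / (b i : ℝ) ^ j)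
        ((∑ j ∈ Finset.Icc 1 (r i), (x i j : ℝ) / (b i : ℝ) ^ j) + ((b i : ℝ) ^ r i)⁻¹)) ↔
      n % (b i) ^ (r i) = c i :=
    fun i => key_coord (hb i) (x i) (hx i) (r i) (hr i) n
  rw [hXeq]
  constructor
  · intro h
    have hni : ∀ i, (n : ℤ) ≡ X [ZMOD (b i : ℤ) ^ r i] := fun i =>
      ((hmod i).mp ((hkey i).mp (h i))).trans (hXc i).symm
    rw [Int.modEq_iff_dvd]
    refine Finset.prod_dvd_of_coprime ?_ (fun i _ => Int.modEq_iff_dvd.mp (hni i))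
    intro i _ j _ hij
    exact (Nat.isCoprime_iff_coprime.mpr (hcop i j hij)).pow
  · intro h i
    have h1 : (n : ℤ) ≡ X [ZMOD (b i : ℤ) ^ r i] :=
      h.of_dvd (Finset.dvd_prod_of_mem (fun k => (b k : ℤ) ^ r k) (Finset.mem_univ i))
    exact (hkey i).mpr ((hmod i).mpr (h1.trans (hXc i)))

/-- Lemma 4.2: simultaneous membership of the radical inverses in elementary
intervals is a single congruence modulo `B_r`, via the Chinese remainder theorem. -/
theorem radInv_mem_iff_mod_crt (s : ℕ) (hs : 1 ≤ s) (b : Fin s → ℕ) (hb : ∀ i, 2 ≤ b i)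
    (hcop : ∀ i j, i ≠ j → Nat.Coprime (b i) (b j))
    (x : Fin s → ℕ → ℕ) (hx : ∀ i j, x i j < b i)
    (r : Fin s → ℕ) (hr : ∀ i, 1 ≤ r i)
    (M : Fin s → ℤ)
    (hM : ∀ i, M i * ∏ j ∈ Finset.univ.erase i, (b j : ℤ) ^ r j ≡ 1
      [ZMOD ((b i : ℤ) ^ r i)])
    (n : ℕ) :
    (∀ i, radInv (b i) n ∈
        Set.Ico (∑ j ∈ Finset.Icc 1 (r i), (x i j : ℝ) / (b i : ℝ) ^ j)
          ((∑ j ∈ Finset.Icc 1 (r i), (x i j : ℝ) / (b i : ℝ) ^ j) + ((b i : ℝ) ^ r i)⁻¹)) ↔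
      (n : ℤ) ≡ ∑ i, M i * (∏ j ∈ Finset.univ.erase i, (b j : ℤ) ^ r j) *
          (∑ j ∈ Finset.Icc 1 (r i), (x i j : ℤ) * (b i : ℤ) ^ (j - 1))
        [ZMOD (∏ i, (b i : ℤ) ^ r i)] := by
  exact radInv_mem_iff_mod_crt' s hs b hb hcop x hx r hr M hM n
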